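/- Let x be a positive irrational real number, let p be a prime with p < x, let k be an integer with 1 ≤ k ≤ p−1, and let a be a squarefree positive integer all of whose prime factors are less than x. Then R(0, x/a) − R((kN_p − x)/a, kN_p/a) equals 1 if p divides a and {x/a} > {kN_p/a}, and equals 0 otherwise (i.e., if p divides a but {x/a} ≤ {kN_p/a}, or if p does not divide a). -/

import Mathlib

open scoped Classical
open Finset

noncomputable section

/-- Sum of the Möbius function over positive integers `a` in the open interval `(u, v)`
that are *not* divisible by `p`. -/
def Mp' (p : ℕ) (u v : ℝ) : ℤ :=
  ∑ a ∈ (Finset.Icc 1 ⌈v⌉₊).filter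
      (fun a : ℕ => u < (a : ℝ) ∧ (a : ℝ) < v ∧ ¬ p ∣ a),
    ArithmeticFunction.moebius a

/-- Sum of the Möbius function over positive integers `a` in the open interval `(u, v)`
that *are* divisible by `p`. -/
def Mp (p : ℕ) (u v : ℝ) : ℤ :=
  ∑ a ∈ (Finset.Icc 1 ⌈v⌉₊).filter
      (fun a : ℕ => u < (a : ℝ) ∧ (a : ℝ) < v ∧ p ∣ a),
    ArithmeticFunction.moebius a

/-- `Sx y u v` : the set of positive integers in the open interval `(u, v)` all of whose
prime divisors exceed `y`. -/
def Sx (y u v : ℝ) : Set ℕ :=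
  {a : ℕ | 0 < a ∧ u < (a : ℝ) ∧ (a : ℝ) < v ∧ ∀ q : ℕ, q.Prime → q ∣ a → y < (q : ℝ)}

/-- `Np x p` : the product of all primes `q < x` with `q ≠ p`. -/
def Np (x : ℝ) (p : ℕ) : ℕ :=
  ∏ q ∈ (Finset.range ⌈x⌉₊).filter (fun q : ℕ => q.Prime ∧ (q : ℝ) < x ∧ q ≠ p), q

/-- `Aset x j` : squarefree positive integers with exactly `j` prime factors,
all of them less than `x`. -/
def Aset (x : ℝ) (j : ℕ) : Finset ℕ :=
  (Finset.Icc 1 (⌈x⌉₊ ^ j)).filter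
    (fun a => Squarefree a ∧ a.primeFactors.card = j ∧ ∀ q ∈ a.primeFactors, (q : ℝ) < x)

/-- `Nint a b` : the number of integers in the open interval `(a, b)`. -/
def Nint (a b : ℝ) : ℕ :=
  (Finset.Ioo ⌊a⌋ ⌈b⌉).card

/-- `Rres a b = (b - a) - N(a, b)`. -/
def Rres (a b : ℝ) : ℝ :=
  (b - a) - Nint a b

/-- `piR t` : the number of primes `≤ t`. -/
def piR (t : ℝ) : ℕ :=
  Nat.primeCounting ⌊t⌋₊


lemma ceil_irr {L : ℝ} (hL : Irrational L) : ⌈L⌉ = ⌊L⌋ + 1 := by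
  rw [Int.ceil_eq_iff]
  refine ⟨?_, ?_⟩
  · push_cast
    have := (Int.floor_le L).lt_of_ne (fun h => (hL.ne_int ⌊L⌋) h.symm)
    linarith
  · push_cast
    exact (Int.lt_floor_add_one L).le

lemma Nint_eq (u v : ℝ) : Nint u v = (⌈v⌉ - ⌊u⌋ - 1).toNat := by
  simp [Nint, Int.card_Ioo]

lemma Rres_zero {L : ℝ} (hL : Irrational L) (h0 : 0 < L) : Rres 0 L = Int.fract L := by
  have h2 : (0:ℤ) ≤ ⌊L⌋ := Int.floor_nonneg.mpr h0.le
  have h3 : (Nint 0 L : ℝ) = (⌊L⌋ : ℝ) := by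
    rw [Nint_eq, ceil_irr hL]
    have h4 : ⌊L⌋ + 1 - ⌊(0:ℝ)⌋ - 1 = ⌊L⌋ := by simp
    rw [h4]
    exact_mod_cast Int.toNat_of_nonneg h2
  rw [Rres, h3, Int.fract]
  ring

lemma Rres_int_sub {L : ℝ} (hL : Irrational L) (h0 : 0 < L) (c : ℤ) :
    Rres ((c : ℝ) - L) c = Int.fract L := by
  have h2 : (0:ℤ) ≤ ⌊L⌋ := Int.floor_nonneg.mpr h0.le
  have hf : ⌊(c:ℝ) - L⌋ = c - ⌈L⌉ := by
    rw [sub_eq_add_neg, Int.floor_intCast_add, Int.floor_neg, sub_eq_add_neg]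
  have h3 : (Nint ((c:ℝ) - L) c : ℝ) = (⌊L⌋ : ℝ) := by
    rw [Nint_eq, hf, Int.ceil_intCast, ceil_irr hL]
    have h4 : c - (c - (⌊L⌋ + 1)) - 1 = ⌊L⌋ := by ring
    rw [h4]
    exact_mod_cast Int.toNat_of_nonneg h2
  rw [Rres, h3, Int.fract]
  ring

lemma floor_sub_lt' {v L : ℝ} (h : Int.fract v < Int.fract L) :
    ⌊v - L⌋ = ⌊v⌋ - ⌊L⌋ - 1 := by
  have h1 := Int.floor_add_fract v
  have h2 := Int.floor_add_fract L
  have h3 := Int.fract_nonneg v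
  have h4 := Int.fract_lt_one L
  rw [Int.floor_eq_iff]
  constructor <;> push_cast <;> linarith

lemma floor_sub_gt' {v L : ℝ} (h : Int.fract L < Int.fract v) :
    ⌊v - L⌋ = ⌊v⌋ - ⌊L⌋ := by
  have h1 := Int.floor_add_fract v
  have h2 := Int.floor_add_fract L
  have h3 := Int.fract_nonneg L
  have h4 := Int.fract_lt_one v
  rw [Int.floor_eq_iff]
  constructor <;> push_cast <;> linarith

lemma ceil_of_fract_ne {v : ℝ} (hv : Int.fract v ≠ 0) : ⌈v⌉ = ⌊v⌋ + 1 := by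
  rw [Int.ceil_eq_iff]
  have h1 := Int.floor_add_fract v
  have h3 := Int.fract_nonneg v
  have h5 : 0 < Int.fract v := lt_of_le_of_ne h3 (Ne.symm hv)
  have h4 := Int.fract_lt_one v
  constructor <;> push_cast <;> linarith

lemma Rres_sub_lt {v L : ℝ} (hvL : Int.fract v < Int.fract L) (hv : Int.fract v ≠ 0)
    (h0 : 0 < L) : Rres (v - L) v = Int.fract L - 1 := by
  have h2 : (0:ℤ) ≤ ⌊L⌋ := Int.floor_nonneg.mpr h0.le
  have h3 : (Nint (v - L) v : ℝ) = (⌊L⌋ : ℝ) + 1 := by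
    rw [Nint_eq, ceil_of_fract_ne hv, floor_sub_lt' hvL]
    have h4 : ⌊v⌋ + 1 - (⌊v⌋ - ⌊L⌋ - 1) - 1 = ⌊L⌋ + 1 := by ring
    rw [h4]
    have h5 : ((⌊L⌋ + 1).toNat : ℤ) = ⌊L⌋ + 1 := Int.toNat_of_nonneg (by omega)
    exact_mod_cast h5
  rw [Rres, h3, Int.fract]
  ring

lemma Rres_sub_gt {v L : ℝ} (hvL : Int.fract L < Int.fract v) (hv : Int.fract v ≠ 0)
    (h0 : 0 < L) : Rres (v - L) v = Int.fract L := by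
  have h2 : (0:ℤ) ≤ ⌊L⌋ := Int.floor_nonneg.mpr h0.le
  have h3 : (Nint (v - L) v : ℝ) = (⌊L⌋ : ℝ) := by
    rw [Nint_eq, ceil_of_fract_ne hv, floor_sub_gt' hvL]
    have h4 : ⌊v⌋ + 1 - (⌊v⌋ - ⌊L⌋) - 1 = ⌊L⌋ := by ring
    rw [h4]
    exact_mod_cast Int.toNat_of_nonneg h2
  rw [Rres, h3, Int.fract]
  ring


theorem stmt_11 (x : ℝ) (hx : 0 < x) (hxirr : Irrational x)
    (p : ℕ) (hp : p.Prime) (hpx : (p : ℝ) < x)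
    (k : ℕ) (hk1 : 1 ≤ k) (hk2 : k ≤ p - 1)
    (a : ℕ) (ha : 0 < a) (hsf : Squarefree a)
    (hfac : ∀ q ∈ a.primeFactors, (q : ℝ) < x) :
    Rres 0 (x / a) - Rres (((k : ℝ) * Np x p - x) / a) (((k : ℝ) * Np x p) / a)
      = if p ∣ a ∧ Int.fract (((k : ℝ) * Np x p) / a) < Int.fract (x / a)
        then 1 else 0 := by
  have haR : (a : ℝ) ≠ 0 := Nat.cast_ne_zero.mpr ha.ne'
  set L : ℝ := x / a with hLdef
  have hL : Irrational L := hxirr.div_natCast ha.ne'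
  have hL0 : 0 < L := div_pos hx (Nat.cast_pos.mpr ha)
  have hMv : ((k : ℝ) * Np x p) = ((k * Np x p : ℕ) : ℝ) := by push_cast; ring
  rw [hMv]
  set m : ℕ := k * Np x p with hmdef
  set v : ℝ := (m : ℝ) / a with hvdef
  have hu : ((m : ℝ) - x) / a = v - L := by
    rw [hvdef, hLdef]; ring
  have hpNp : ¬ p ∣ Np x p := by
    intro hd
    rw [Np] at hd
    obtain ⟨q, hq, hpq⟩ := (hp.prime.dvd_finset_prod_iff _).mp hd
    simp only [Finset.mem_filter] at hq
    exact hq.2.2.2 ((Nat.prime_dvd_prime_iff_eq hp hq.2.1).mp hpq).symm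
  have hpk : ¬ p ∣ k := by
    intro hd
    have := Nat.le_of_dvd hk1 hd
    have hp2 := hp.two_le
    omega
  have hpm : ¬ p ∣ m := by
    rw [hmdef]
    intro hd
    rcases (Nat.Prime.dvd_mul hp).mp hd with h | h
    · exact hpk h
    · exact hpNp h
  by_cases hpa : p ∣ a
  · -- then a does not divide m, so v is not an integer
    have ham : ¬ a ∣ m := fun h => hpm (hpa.trans h)
    have hfv : Int.fract v ≠ 0 := by
      rw [hvdef, Int.fract_div_natCast_eq_div_natCast_mod]
      have hmod : m % a ≠ 0 := fun h => ham (Nat.dvd_of_mod_eq_zero h)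
      positivity
    have hne : Int.fract v ≠ Int.fract L := by
      intro h
      have : Irrational (Int.fract L) := by
        rw [Int.fract]
        exact hL.sub_intCast ⌊L⌋
      rw [← h] at this
      rw [hvdef, Int.fract_div_natCast_eq_div_natCast_mod] at this
      exact this ⟨(m % a : ℕ) / (a : ℕ), by push_cast; ring⟩
    rw [hu]
    rcases lt_or_gt_of_ne hne with hlt | hgt
    · rw [Rres_zero hL hL0, Rres_sub_lt hlt hfv hL0, if_pos ⟨hpa, hlt⟩]
      ring
    · rw [Rres_zero hL hL0, Rres_sub_gt hgt hfv hL0,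
        if_neg (by rintro ⟨-, h⟩; exact absurd h (not_lt.mpr hgt.le))]
      ring
  · -- a divides Np, hence m; v is an integer
    have hsub : a.primeFactors ⊆ (Finset.range ⌈x⌉₊).filter
        (fun q : ℕ => q.Prime ∧ (q : ℝ) < x ∧ q ≠ p) := by
      intro q hq
      have hqp : q.Prime := Nat.prime_of_mem_primeFactors hq
      have hqd : q ∣ a := Nat.dvd_of_mem_primeFactors hq
      have hqx : (q : ℝ) < x := hfac q hq
      have hqne : q ≠ p := fun h => hpa (h ▸ hqd)
      refine Finset.mem_filter.mpr ⟨Finset.mem_range.mpr ?_, hqp, hqx, hqne⟩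
      have : (q : ℝ) < (⌈x⌉₊ : ℝ) := lt_of_lt_of_le hqx (Nat.le_ceil x)
      exact_mod_cast this
    have haNp : a ∣ Np x p := by
      have h1 : a = ∏ q ∈ a.primeFactors, q := (Nat.prod_primeFactors_of_squarefree hsf).symm
      rw [h1, Np]
      exact Finset.prod_dvd_prod_of_subset _ _ _ hsub
    have ham : a ∣ m := haNp.trans (dvd_mul_left (Np x p) k)
    obtain ⟨c, hc⟩ := ham
    have hvc : v = ((c : ℤ) : ℝ) := by
      rw [hvdef, hc]
      push_cast
      field_simp
    have hfv : Int.fract v = 0 := by rw [hvc, Int.fract_intCast]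
    rw [hu, Rres_zero hL hL0, hvc, Rres_int_sub hL hL0 c,
      if_neg (by rintro ⟨h, -⟩; exact hpa h)]
    ring


end
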